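/- Let c be an odd positive integer. Define G(1,c) = ∑_{x=0}^{c−1} exp(2πi·x²/c) ∈ ℂ and ε_c = 1 if c ≡ 1 (mod 4), ε_c = i if c ≡ 3 (mod 4). Then G(1,c) = ε_c · √c. -/

import Mathlib

open Finset

/-- The quadratic Gauss sum `G(a,c) = ∑_{x=0}^{c−1} exp(2πi·a·x²/c)`. -/
noncomputable def gaussSum2 (a : ℤ) (c : ℕ) : ℂ :=
  ∑ x ∈ Finset.range c,
    Complex.exp (2 * Real.pi * Complex.I * a * (x : ℂ) ^ 2 / c)

/-- The metaplectic square-root phase `ε_c` for odd `c`. -/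
noncomputable def epsOdd (c : ℕ) : ℂ :=
  if c % 4 = 1 then 1 else Complex.I


namespace GaussEval
open Matrix Polynomial Complex

noncomputable def zc (c : ℕ) : ℂ := Complex.exp (2 * Real.pi * Complex.I / c)
noncomputable def ec (c : ℕ) [NeZero c] (x : ZMod c) : ℂ := zc c ^ x.val

section Main
variable (c : ℕ) [NeZero c]

lemma zc_prim : IsPrimitiveRoot (zc c) c := Complex.isPrimitiveRoot_exp c (NeZero.ne c)

lemma zc_pow_c : zc c ^ c = 1 := (zc_prim c).pow_eq_one

lemma zc_pow_mod (m : ℕ) : zc c ^ (m % c) = zc c ^ m := by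
  conv_rhs => rw [← Nat.div_add_mod m c]
  rw [pow_add, pow_mul, zc_pow_c, one_pow, one_mul]

lemma ec_natCast (n : ℕ) : ec c (n : ZMod c) = zc c ^ n := by
  rw [ec, ZMod.val_natCast, zc_pow_mod]

lemma ec_zero : ec c 0 = 1 := by
  have := ec_natCast c 0
  simpa using this

lemma ec_add (x y : ZMod c) : ec c (x + y) = ec c x * ec c y := by
  rw [ec, ec, ec, ZMod.val_add, zc_pow_mod, pow_add]

lemma ec_ne_one {x : ZMod c} (hx : x ≠ 0) : ec c x ≠ 1 := by
  rw [ec]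
  refine (zc_prim c).pow_ne_one_of_pos_of_lt ?_ (ZMod.val_lt x)
  exact (fun h => hx (by rwa [← ZMod.val_eq_zero]))

lemma sum_ec (a : ZMod c) : ∑ x : ZMod c, ec c (a * x) = if a = 0 then (c : ℂ) else 0 := by
  split_ifs with h
  · subst h
    simp only [zero_mul, ec_zero]
    simp [ZMod.card]
  · have key : ec c a * ∑ x : ZMod c, ec c (a * x) = ∑ x : ZMod c, ec c (a * x) := by
      rw [Finset.mul_sum]
      refine Fintype.sum_equiv (Equiv.addRight 1) _ _ fun x => ?_
      rw [← ec_add]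
      congr 1
      simp only [Equiv.coe_addRight]
      ring
    have h2 : (ec c a - 1) * ∑ x : ZMod c, ec c (a * x) = 0 := by
      rw [sub_mul, one_mul, key, sub_self]
    rcases mul_eq_zero.1 h2 with h3 | h3
    · exact absurd (sub_eq_zero.1 h3) (ec_ne_one c h)
    · exact h3


noncomputable def Fm (c : ℕ) [NeZero c] : Matrix (ZMod c) (ZMod c) ℂ :=
  Matrix.of fun j k => ec c (j * k)

noncomputable def Gs (c : ℕ) [NeZero c] : ℂ := ∑ x : ZMod c, ec c (x * x)

lemma abs_zc : ‖zc c‖ = 1 := by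
  have h : zc c = Complex.exp (((2 * Real.pi / c : ℝ) : ℂ) * Complex.I) := by
    rw [zc]; congr 1; push_cast; ring
  rw [h, Complex.norm_exp_ofReal_mul_I]

lemma ec_ne_zero (x : ZMod c) : ec c x ≠ 0 := by
  rw [ec]
  exact pow_ne_zero _ (by intro h; simpa [h] using abs_zc c)

lemma star_ec (x : ZMod c) : star (ec c x) = ec c (-x) := by
  have h1 : ec c (-x) * ec c x = 1 := by
    rw [← ec_add]; simp [ec_zero]
  have h2 : star (ec c x) * ec c x = 1 := by
    have habs : ‖ec c x‖ = 1 := by rw [ec, norm_pow, abs_zc, one_pow]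
    rw [Complex.star_def, ← Complex.normSq_eq_conj_mul_self, Complex.normSq_eq_norm_sq, habs]
    norm_num
  exact mul_right_cancel₀ (ec_ne_zero c x) (h2.trans h1.symm)

lemma two_mul_eq_zero_iff (hodd : Odd c) (d : ZMod c) : 2 * d = 0 ↔ d = 0 := by
  have hu : IsUnit (2 : ZMod c) := by
    have := (ZMod.isUnit_iff_coprime 2 c).2 (Nat.coprime_two_left.2 hodd)
    simpa using this
  constructor
  · intro h; exact (hu.mul_right_eq_zero).1 h
  · intro h; rw [h, mul_zero]

lemma Fm_mul_Fm (j k : ZMod c) : (Fm c * Fm c) j k = if j + k = 0 then (c : ℂ) else 0 := by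
  rw [Matrix.mul_apply, ← sum_ec c (j + k)]
  refine Finset.sum_congr rfl fun l _ => ?_
  show ec c (j * l) * ec c (l * k) = ec c ((j + k) * l)
  rw [← ec_add]
  congr 1
  ring

lemma trace_Fm : (Fm c).trace = Gs c := by
  rw [Matrix.trace, Gs]
  refine Finset.sum_congr rfl fun j _ => rfl

lemma trace_Fm_sq (hodd : Odd c) : (Fm c * Fm c).trace = c := by
  rw [Matrix.trace]
  have h : ∀ j : ZMod c, (Fm c * Fm c).diag j = if j = 0 then (c : ℂ) else 0 := by
    intro j
    rw [Matrix.diag_apply, Fm_mul_Fm]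
    congr 1
    rw [← two_mul_eq_zero_iff c hodd j, two_mul]
  rw [Finset.sum_congr rfl fun j _ => h j]
  simp

lemma add_eq_zero_iff' (a b : ZMod c) : a + b = 0 ↔ b = -a := by
  constructor
  · intro h; exact (neg_eq_of_add_eq_zero_right h).symm
  · intro h; rw [h, add_neg_cancel]

lemma Fm_pow_four : (Fm c * Fm c) * (Fm c * Fm c)
    = ((c : ℂ) ^ 2) • (1 : Matrix (ZMod c) (ZMod c) ℂ) := by
  ext j k
  rw [Matrix.mul_apply]
  have key : ∀ l : ZMod c, (Fm c * Fm c) j l * (Fm c * Fm c) l k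
      = if l = -j then (if j = k then (c : ℂ)^2 else 0) else 0 := by
    intro l
    rw [Fm_mul_Fm, Fm_mul_Fm, if_congr (add_eq_zero_iff' c j l) rfl rfl,
      if_congr (add_eq_zero_iff' c l k) rfl rfl]
    by_cases hl : l = -j
    · subst hl
      rw [if_pos rfl, if_pos rfl, neg_neg]
      by_cases hjk : j = k
      · subst hjk; rw [if_pos rfl, if_pos rfl]; ring
      · rw [if_neg (fun h => hjk h.symm), if_neg hjk, mul_zero]
    · rw [if_neg hl, if_neg hl, zero_mul]
  rw [Finset.sum_congr rfl fun l _ => key l, Finset.sum_ite_eq' Finset.univ (-j)]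
  simp [Matrix.one_apply]

lemma Gs_mul_star (hodd : Odd c) : Gs c * star (Gs c) = c := by
  have step1 : Gs c * star (Gs c) = ∑ k : ZMod c, ∑ j : ZMod c, ec c (j*j) * ec c (-(k*k)) := by
    rw [Gs, star_sum]
    simp_rw [star_ec]
    rw [Finset.sum_mul_sum, Finset.sum_comm]
  rw [step1]
  have step2 : ∀ k : ZMod c, ∑ j : ZMod c, ec c (j*j) * ec c (-(k*k))
      = ∑ d : ZMod c, ec c (d*d) * ec c ((2*d) * k) := by
    intro k
    refine (Fintype.sum_equiv (Equiv.addLeft k) _ _ fun d => ?_).symm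
    show ec c (d*d) * ec c ((2*d)*k) = ec c ((k+d)*(k+d)) * ec c (-(k*k))
    rw [← ec_add, ← ec_add]
    congr 1
    ring
  rw [Finset.sum_congr rfl fun k _ => step2 k, Finset.sum_comm]
  have step3 : ∀ d : ZMod c, ∑ k : ZMod c, ec c (d*d) * ec c ((2*d) * k)
      = if d = 0 then ec c (d*d) * c else 0 := by
    intro d
    rw [← Finset.mul_sum, sum_ec, if_congr (two_mul_eq_zero_iff c hodd d) rfl rfl]
    split_ifs <;> simp
  rw [Finset.sum_congr rfl fun d _ => step3 d, Finset.sum_ite_eq' Finset.univ (0 : ZMod c)]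
  simp [ec_zero]


lemma gaussSum2_eq_Gs : gaussSum2 1 c = Gs c := by
  rw [gaussSum2, Gs]
  have term : ∀ x : ℕ, Complex.exp (2 * Real.pi * Complex.I * (1:ℤ) * (x : ℂ) ^ 2 / c)
      = ec c ((x : ZMod c) * (x : ZMod c)) := by
    intro x
    have : ((x : ZMod c) * (x : ZMod c)) = ((x * x : ℕ) : ZMod c) := by push_cast; ring
    rw [this, ec_natCast, zc, ← Complex.exp_nat_mul]
    congr 1
    push_cast
    ring
  rw [Finset.sum_congr rfl fun x _ => term x]
  -- now reindex range c ↔ ZMod c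
  refine Finset.sum_nbij' (fun x => (x : ZMod c)) (fun y => y.val) ?_ ?_ ?_ ?_ ?_
  · intros; exact Finset.mem_univ _
  · intro y _; exact Finset.mem_range.2 y.val_lt
  · intro x hx; exact ZMod.val_cast_of_lt (Finset.mem_range.1 hx)
  · intro y _; exact ZMod.natCast_rightInverse y
  · intros; rfl

-- eval of charpoly
lemma eval_charpoly {n : Type*} [Fintype n] [DecidableEq n] (M : Matrix n n ℂ) (x : ℂ) :
    M.charpoly.eval x = (x • (1 : Matrix n n ℂ) - M).det := by
  rw [Matrix.charpoly, ← Polynomial.coe_evalRingHom, RingHom.map_det]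
  congr 1
  ext i j
  by_cases h : i = j <;>
    simp [Matrix.charmatrix_apply, Matrix.one_apply, Matrix.diagonal_apply, h]

-- every root of charpoly satisfies x^4 = c^2 given F^4 = c^2 • 1
lemma root_pow_four {n : Type*} [Fintype n] [DecidableEq n] (M : Matrix n n ℂ) (k : ℂ)
    (hM : M * M * (M * M) = k • (1 : Matrix n n ℂ)) {x : ℂ}
    (hx : x ∈ M.charpoly.roots) : x ^ 4 = k := by
  have hroot : M.charpoly.eval x = 0 := (Polynomial.isRoot_of_mem_roots hx)
  rw [eval_charpoly] at hroot
  obtain ⟨v, hv0, hv⟩ := Matrix.exists_mulVec_eq_zero_iff.2 hroot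
  have hMv : M.mulVec v = x • v := by
    have := hv
    rw [Matrix.sub_mulVec, Matrix.smul_mulVec, Matrix.one_mulVec] at this
    have h2 := sub_eq_zero.1 this
    exact h2.symm
  have h2 : (M * M).mulVec v = (x^2) • v := by
    rw [← Matrix.mulVec_mulVec, hMv, Matrix.mulVec_smul, hMv, smul_smul, pow_two]
  have h4 : (M * M * (M * M)).mulVec v = (x^4) • v := by
    rw [← Matrix.mulVec_mulVec, h2, Matrix.mulVec_smul, h2, smul_smul]
    congr 1
    ring
  rw [hM] at h4
  rw [Matrix.smul_mulVec, Matrix.one_mulVec] at h4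
  obtain ⟨i, hi⟩ := Function.ne_iff.1 hv0
  have := congrFun h4 i
  simp only [Pi.smul_apply, smul_eq_mul] at this
  rw [mul_eq_mul_right_iff] at this
  rcases this with h | h
  · exact h.symm
  · exact absurd h hi

-- multiset decomposition
lemma multiset_four (R : Multiset ℂ) (a0 a1 a2 a3 : ℂ)
    (hmem : ∀ x ∈ R, x = a0 ∨ x = a1 ∨ x = a2 ∨ x = a3) :
    ∃ m0 m1 m2 m3 : ℕ, m0 + m1 + m2 + m3 = Multiset.card R ∧
      (∀ f : ℂ → ℂ, (R.map f).sum
        = m0 • f a0 + m1 • f a1 + m2 • f a2 + m3 • f a3) ∧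
      R.prod = a0 ^ m0 * a1 ^ m1 * a2 ^ m2 * a3 ^ m3 := by
  induction R using Multiset.induction_on with
  | empty => exact ⟨0, 0, 0, 0, by simp, by simp, by simp⟩
  | cons x R ih =>
    obtain ⟨m0, m1, m2, m3, hcard, hsum, hprod⟩ :=
      ih (fun y hy => hmem y (Multiset.mem_cons_of_mem hy))
    rcases hmem x (Multiset.mem_cons_self x R) with h | h | h | h
    · exact ⟨m0+1, m1, m2, m3, by rw [Multiset.card_cons]; omega, fun f => by
        simp [hsum f, h, add_smul]; ring, by simp [hprod, h, pow_succ]; ring⟩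
    · exact ⟨m0, m1+1, m2, m3, by rw [Multiset.card_cons]; omega, fun f => by
        simp [hsum f, h, add_smul]; ring, by simp [hprod, h, pow_succ]; ring⟩
    · exact ⟨m0, m1, m2+1, m3, by rw [Multiset.card_cons]; omega, fun f => by
        simp [hsum f, h, add_smul]; ring, by simp [hprod, h, pow_succ]; ring⟩
    · exact ⟨m0, m1, m2, m3+1, by rw [Multiset.card_cons]; omega, fun f => by
        simp [hsum f, h, add_smul]; ring, by simp [hprod, h, pow_succ]; ring⟩

-- spectral mapping for squares
lemma charpoly_sq_roots {n : Type*} [Fintype n] [DecidableEq n] (M : Matrix n n ℂ) :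
    (M * M).charpoly.roots = M.charpoly.roots.map (fun x => x ^ 2) := by
  set R := M.charpoly.roots with hR
  have hsplit : M.charpoly.Splits := IsAlgClosed.splits _
  have hp : M.charpoly = (R.map (fun a => X - C a)).prod :=
    hsplit.eq_prod_roots_of_monic M.charpoly_monic
  have hcard : Multiset.card R = Fintype.card n := by
    rw [hR, (Polynomial.splits_iff_card_roots).1 hsplit, Matrix.charpoly_natDegree_eq_dim]
  have key : (M * M).charpoly = ((R.map (fun a => a ^ 2)).map (fun a => X - C a)).prod := by
    apply Polynomial.funext
    intro x
    rw [Polynomial.eval_multiset_prod, Multiset.map_map, Multiset.map_map]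
    have hfun : ((Polynomial.eval x ∘ (fun a : ℂ => X - C a)) ∘ (fun a : ℂ => a ^ 2))
        = fun a : ℂ => x - a ^ 2 := by ext a; simp
    rw [hfun]
    obtain ⟨y, hy⟩ := IsAlgClosed.exists_pow_nat_eq x (n := 2) (by norm_num)
    have efac : (y • (1 : Matrix n n ℂ) - M) * (y • 1 + M) = x • 1 - M * M := by
      rw [sub_mul, mul_add, mul_add, smul_mul_assoc, smul_mul_assoc, one_mul,
        mul_smul_comm, mul_one, smul_smul, ← pow_two, hy]
      simp only [one_mul]
      abel
    have e1 : (M * M).charpoly.eval x = ((y • 1 - M) * (y • 1 + M)).det := by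
      rw [eval_charpoly, efac]
    have e2 : (y • (1 : Matrix n n ℂ) + M) = -((-y) • 1 - M) := by
      rw [neg_sub, neg_smul, sub_neg_eq_add]
      abel
    have epos : M.charpoly.eval y = (R.map (fun a => y - a)).prod := by
      conv_lhs => rw [hp]
      rw [Polynomial.eval_multiset_prod, Multiset.map_map]
      congr 1
      ext a
      simp
    have eneg : M.charpoly.eval (-y) = (R.map (fun a => -y - a)).prod := by
      conv_lhs => rw [hp]
      rw [Polynomial.eval_multiset_prod, Multiset.map_map]
      congr 1
      ext a
      simp
    have econst : (R.map (fun _ => (-1 : ℂ))).prod = (-1) ^ (Fintype.card n) := by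
      rw [Multiset.map_const', Multiset.prod_replicate, hcard]
    have e3 : ((-1 : ℂ)) ^ (Fintype.card n) * (R.map (fun a => -y - a)).prod
        = (R.map (fun a => y + a)).prod := by
      rw [← econst, ← Multiset.prod_map_mul]
      congr 1
      ext a
      ring
    calc (M * M).charpoly.eval x
        = ((y • (1 : Matrix n n ℂ) - M)).det * ((y • 1 + M)).det := by
          rw [e1, Matrix.det_mul]
      _ = M.charpoly.eval y * ((-1 : ℂ)) ^ (Fintype.card n) * M.charpoly.eval (-y) := by
          rw [eval_charpoly, eval_charpoly, e2, Matrix.det_neg]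
          ring
      _ = (R.map (fun a => y - a)).prod * (R.map (fun a => y + a)).prod := by
          rw [epos, eneg, mul_assoc, e3]
      _ = (R.map (fun a => x - a ^ 2)).prod := by
          rw [← Multiset.prod_map_mul]
          congr 1
          ext a
          rw [← hy]
          ring
  rw [key, Polynomial.roots_multiset_prod_X_sub_C]


-- ℕ sum identities
lemma double_sum_id (m : ℕ) :
    2 * (∑ i ∈ range (m+1), ∑ j ∈ Ioo i (m+1), (i+j)) = (m+1) * m^2 := by
  induction m with
  | zero => simp
  | succ m ih =>
    have houter : ∑ i ∈ range (m+2), ∑ j ∈ Ioo i (m+2), (i+j)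
        = (∑ i ∈ range (m+1), ∑ j ∈ Ioo i (m+2), (i+j)) + 0 := by
      rw [Finset.sum_range_succ]
      congr 1
      exact Finset.sum_eq_zero fun j hj => by
        have := Finset.mem_Ioo.1 hj; omega
    have hinner : ∀ i ∈ range (m+1), ∑ j ∈ Ioo i (m+2), (i+j)
        = (i + (m+1)) + ∑ j ∈ Ioo i (m+1), (i+j) := by
      intro i hi
      have hi' : i < m + 1 := Finset.mem_range.1 hi
      have : Ioo i (m+2) = insert (m+1) (Ioo i (m+1)) := by
        ext j; simp only [Finset.mem_Ioo, Finset.mem_insert]; omega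
      rw [this, Finset.sum_insert (by simp)]
    have hgauss := Finset.sum_range_id_mul_two (m+1)
    rw [houter, add_zero, Finset.sum_congr rfl hinner, Finset.sum_add_distrib,
      Finset.sum_add_distrib, Finset.sum_const, Finset.card_range]
    simp only [smul_eq_mul]
    have h1 : (∑ i ∈ range (m+1), i) * 2 = (m+1) * m := by
      rw [hgauss]; simp
    nlinarith [ih, h1]

-- the equivalence Fin c ≃ ZMod c
def finEquivZMod : Fin c ≃ ZMod c where
  toFun i := (i : ℕ)
  invFun x := ⟨x.val, x.val_lt⟩
  left_inv i := by
    ext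
    simp [ZMod.val_cast_of_lt i.isLt]
  right_inv x := by
    simp [ZMod.natCast_rightInverse x]

lemma det_Fm_vandermonde :
    (Fm c).det = ∏ i : Fin c, ∏ j ∈ Ioi i, (zc c ^ (j:ℕ) - zc c ^ (i:ℕ)) := by
  rw [← Matrix.det_vandermonde]
  have : Fm c = (Matrix.reindex (finEquivZMod c) (finEquivZMod c))
      (Matrix.vandermonde (fun i : Fin c => zc c ^ (i : ℕ))) := by
    ext j k
    simp only [Matrix.reindex_apply, Matrix.submatrix_apply, Matrix.vandermonde_apply, Fm,
      Matrix.of_apply]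
    have h1 : ∀ y : ZMod c, (((finEquivZMod c).symm y : Fin c) : ℕ) = y.val := fun y => rfl
    rw [h1, h1]
    have h2 : j * k = ((j.val * k.val : ℕ) : ZMod c) := by
      push_cast
      rw [ZMod.natCast_rightInverse j, ZMod.natCast_rightInverse k]
    rw [h2, ec_natCast, pow_mul]
  rw [this, Matrix.det_reindex_self]

-- 2 i sin identity
lemma exp_sub_exp (z : ℂ) :
    Complex.exp (z * Complex.I) - Complex.exp (-z * Complex.I)
      = 2 * Complex.sin z * Complex.I := by
  rw [Complex.sin]
  linear_combination (Complex.exp (z * Complex.I) - Complex.exp (-z * Complex.I)) * Complex.I_mul_I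

lemma zc_pow_exp (n : ℕ) : zc c ^ n = Complex.exp (((2 * Real.pi * n / c : ℝ) : ℂ) * Complex.I) := by
  rw [zc, ← Complex.exp_nat_mul]
  congr 1
  push_cast
  ring

lemma factor_eq (i j : ℕ) (hij : i < j) (hj : j < c) :
    zc c ^ j - zc c ^ i
      = Complex.exp (((Real.pi * (i + j) / c : ℝ) : ℂ) * Complex.I)
        * (((2 * Real.sin (Real.pi * ((j : ℝ) - i) / c) : ℝ) : ℂ) * Complex.I) := by
  have hc0 : (c : ℝ) ≠ 0 := Nat.cast_ne_zero.2 (NeZero.ne c)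
  set A : ℝ := Real.pi * (i + j) / c with hA
  set B : ℝ := Real.pi * ((j : ℝ) - i) / c with hB
  have hsum : A + B = 2 * Real.pi * j / c := by rw [hA, hB]; push_cast; field_simp; ring
  have hdiff : A - B = 2 * Real.pi * i / c := by rw [hA, hB]; push_cast; field_simp; ring
  have h2sin : ((2 * Real.sin B : ℝ) : ℂ) * Complex.I
      = Complex.exp ((B:ℂ) * Complex.I) - Complex.exp (-(B:ℂ) * Complex.I) := by
    have hcast : ((2 * Real.sin B : ℝ) : ℂ) = 2 * Complex.sin (B : ℂ) := by
      push_cast [Complex.ofReal_sin]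
      ring
    rw [hcast]
    exact (exp_sub_exp _).symm
  rw [zc_pow_exp, zc_pow_exp, h2sin, mul_sub, ← Complex.exp_add, ← Complex.exp_add]
  congr 2
  · push_cast [← hsum]; ring
  · push_cast [← hdiff]; ring


lemma fin_sum_Ioi (i : Fin c) (g : ℕ → ℕ) :
    ∑ j ∈ Ioi i, g (j : ℕ) = ∑ j ∈ Ioo (i : ℕ) c, g j := by
  refine Finset.sum_bij (fun j _ => (j : ℕ)) ?_ ?_ ?_ ?_
  · intro j hj
    exact Finset.mem_Ioo.2 ⟨by exact_mod_cast Finset.mem_Ioi.1 hj, j.isLt⟩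
  · intro a _ b _ h
    exact Fin.val_injective h
  · intro b hb
    obtain ⟨h1, h2⟩ := Finset.mem_Ioo.1 hb
    exact ⟨⟨b, h2⟩, Finset.mem_Ioi.2 (by exact h1), rfl⟩
  · intros; rfl

lemma T_val (k : ℕ) (hck : c = 2*k+1) :
    ∑ i : Fin c, ∑ j ∈ Ioi i, ((i : ℕ) + (j : ℕ)) = 2 * (k^2 * c) := by
  have hconv : ∀ i : Fin c, ∑ j ∈ Ioi i, ((i : ℕ) + (j : ℕ))
      = ∑ j ∈ Ioo (i : ℕ) c, ((i : ℕ) + j) := fun i => fin_sum_Ioi c i (fun j => (i : ℕ) + j)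
  rw [Finset.sum_congr rfl fun i _ => hconv i]
  have := Fin.sum_univ_eq_sum_range (fun i => ∑ j ∈ Ioo i c, (i + j)) c
  rw [this]
  have h2 : 2 * (∑ i ∈ range c, ∑ j ∈ Ioo i c, (i+j)) = c * (2*k)^2 := by
    rw [hck]
    exact double_sum_id (2*k)
  have hv : c * (2*k)^2 = 4 * (k^2 * c) := by ring
  omega

lemma Np_val : 2 * (∑ i : Fin c, (Ioi i).card) = c * (c - 1) := by
  have h1 : ∀ i : Fin c, (Ioi i).card = c - 1 - (i : ℕ) := fun i => Fin.card_Ioi i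
  rw [Finset.sum_congr rfl fun i _ => h1 i,
    Fin.sum_univ_eq_sum_range (fun i => c - 1 - i) c, Finset.sum_range_reflect (fun i => i) c]
  rw [mul_comm]
  exact Finset.sum_range_id_mul_two c

lemma det_Fm (k : ℕ) (hck : c = 2*k+1) :
    ∃ (W : ℝ) (Np : ℕ), 0 < W ∧ 2*Np = c*(c-1) ∧ (Fm c).det = Complex.I ^ Np * W := by
  have hc0 : (c : ℝ) ≠ 0 := Nat.cast_ne_zero.2 (NeZero.ne c)
  have hc0' : 0 < (c : ℝ) := Nat.cast_pos.2 (Nat.pos_of_ne_zero (NeZero.ne c))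
  set W : ℝ := ∏ i : Fin c, ∏ j ∈ Ioi i, (2 * Real.sin (Real.pi * ((j:ℕ) - (i:ℕ) : ℝ) / c))
    with hW
  refine ⟨W, ∑ i : Fin c, (Ioi i).card, ?_, Np_val c, ?_⟩
  · rw [hW]
    refine Finset.prod_pos fun i _ => Finset.prod_pos fun j hj => ?_
    have hij0 : i < j := Finset.mem_Ioi.1 hj
    have hij : (i : ℕ) < (j : ℕ) := hij0
    have hjc : (j : ℕ) < c := j.isLt
    have hpos : 0 < Real.pi * ((j:ℕ) - (i:ℕ) : ℝ) / c := by
      apply div_pos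
      · apply mul_pos Real.pi_pos
        have : ((i:ℕ):ℝ) < ((j:ℕ):ℝ) := by exact_mod_cast hij
        linarith
      · exact hc0'
    have hlt : Real.pi * ((j:ℕ) - (i:ℕ) : ℝ) / c < Real.pi := by
      rw [div_lt_iff₀ hc0']
      have h1 : ((j:ℕ) - (i:ℕ) : ℝ) < c := by
        have : ((j:ℕ):ℝ) < c := by exact_mod_cast hjc
        have : (0:ℝ) ≤ ((i:ℕ):ℝ) := by positivity
        linarith
      nlinarith [Real.pi_pos]
    have := Real.sin_pos_of_pos_of_lt_pi hpos hlt
    linarith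
  · rw [det_Fm_vandermonde]
    have hfac : ∀ i : Fin c, ∀ j ∈ Ioi i,
        zc c ^ (j:ℕ) - zc c ^ (i:ℕ)
          = Complex.exp (((Real.pi * ((i:ℕ) + (j:ℕ)) / c : ℝ) : ℂ) * Complex.I)
            * (((2 * Real.sin (Real.pi * ((j:ℕ) - (i:ℕ) : ℝ) / c) : ℝ) : ℂ) * Complex.I) := by
      intro i j hj
      have hij0 : i < j := Finset.mem_Ioi.1 hj
      exact factor_eq c (i:ℕ) (j:ℕ) hij0 j.isLt
    rw [Finset.prod_congr rfl fun i _ => Finset.prod_congr rfl fun j hj => hfac i j hj]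
    have hsplit : ∀ i : Fin c, ∏ j ∈ Ioi i,
        (Complex.exp (((Real.pi * ((i:ℕ) + (j:ℕ)) / c : ℝ) : ℂ) * Complex.I)
          * (((2 * Real.sin (Real.pi * ((j:ℕ) - (i:ℕ) : ℝ) / c) : ℝ) : ℂ) * Complex.I))
        = (∏ j ∈ Ioi i, Complex.exp (((Real.pi * ((i:ℕ) + (j:ℕ)) / c : ℝ) : ℂ) * Complex.I))
          * ((∏ j ∈ Ioi i, (((2 * Real.sin (Real.pi * ((j:ℕ) - (i:ℕ) : ℝ) / c) : ℝ) : ℂ)))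
          * Complex.I ^ (Ioi i).card) := by
      intro i
      rw [Finset.prod_mul_distrib, Finset.prod_mul_distrib, Finset.prod_const]
    rw [Finset.prod_congr rfl fun i _ => hsplit i, Finset.prod_mul_distrib,
      Finset.prod_mul_distrib]
    -- exp part
    have hexp : (∏ i : Fin c, ∏ j ∈ Ioi i,
        Complex.exp (((Real.pi * ((i:ℕ) + (j:ℕ)) / c : ℝ) : ℂ) * Complex.I)) = 1 := by
      rw [Finset.prod_congr rfl fun i (_ : i ∈ Finset.univ) => (Complex.exp_sum (Ioi i) _).symm,
        ← Complex.exp_sum]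
      have hinner : ∑ i : Fin c, ∑ j ∈ Ioi i,
          (((Real.pi * ((i:ℕ) + (j:ℕ)) / c : ℝ) : ℂ) * Complex.I)
          = (((Real.pi * (2 * (k^2 * c)) / c : ℝ) : ℂ) * Complex.I) := by
        have h1 : ∀ i : Fin c, ∑ j ∈ Ioi i,
            (((Real.pi * ((i:ℕ) + (j:ℕ)) / c : ℝ) : ℂ) * Complex.I)
            = (∑ j ∈ Ioi i, ((Real.pi * ((i:ℕ) + (j:ℕ)) / c : ℝ) : ℂ)) * Complex.I :=
          fun i => (Finset.sum_mul _ _ _).symm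
        rw [Finset.sum_congr rfl fun i _ => h1 i, ← Finset.sum_mul]
        congr 1
        have hT := congrArg (fun n : ℕ => (n : ℂ)) (T_val c k hck)
        push_cast at hT ⊢
        have hstep : ∀ (i : Fin c) (j : Fin c),
            (Real.pi : ℂ) * (((i:ℕ):ℂ) + ((j:ℕ):ℂ)) / (c:ℂ)
            = ((Real.pi : ℂ) / c) * (((i:ℕ):ℂ) + ((j:ℕ):ℂ)) := fun i j => by ring
        calc ∑ i : Fin c, ∑ j ∈ Ioi i, (Real.pi : ℂ) * (((i:ℕ):ℂ) + ((j:ℕ):ℂ)) / (c:ℂ)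
            = ∑ i : Fin c, ((Real.pi : ℂ) / c) * ∑ j ∈ Ioi i, (((i:ℕ):ℂ) + ((j:ℕ):ℂ)) := by
              refine Finset.sum_congr rfl fun i _ => ?_
              rw [Finset.mul_sum]
              exact Finset.sum_congr rfl fun j _ => hstep i j
          _ = ((Real.pi : ℂ) / c) * ∑ i : Fin c, ∑ j ∈ Ioi i, (((i:ℕ):ℂ) + ((j:ℕ):ℂ)) := by
              rw [Finset.mul_sum]
          _ = (Real.pi : ℂ) * (2 * ((k:ℂ)^2 * c)) / c := by
              rw [hT]
              ring
      rw [hinner]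
      have h4 : (((Real.pi * (2 * (k^2 * c)) / c : ℝ) : ℂ) * Complex.I)
          = (k^2 : ℕ) * (2 * (Real.pi : ℂ) * Complex.I) := by
        have : (Real.pi * (2 * (k^2 * c)) / c : ℝ) = (k^2 : ℕ) * (2 * Real.pi) := by
          field_simp
          push_cast
          ring
        rw [this]
        push_cast
        ring
      rw [h4, Complex.exp_nat_mul, Complex.exp_two_pi_mul_I, one_pow]
    rw [hexp, one_mul, Finset.prod_pow_eq_pow_sum]
    rw [mul_comm]
    congr 1
    rw [hW]
    push_cast
    rfl


end Main
end GaussEval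

lemma int_sq_cases (a b : ℤ) (hab : a^2 + b^2 = 1) :
    (a = 1 ∧ b = 0) ∨ (a = -1 ∧ b = 0) ∨ (a = 0 ∧ b = 1) ∨ (a = 0 ∧ b = -1) := by
  have ha1 : -1 ≤ a := by nlinarith [sq_nonneg b, sq_nonneg (a+1)]
  have ha2 : a ≤ 1 := by nlinarith [sq_nonneg b, sq_nonneg (a-1)]
  have hb1 : -1 ≤ b := by nlinarith [sq_nonneg a, sq_nonneg (b+1)]
  have hb2 : b ≤ 1 := by nlinarith [sq_nonneg a, sq_nonneg (b-1)]
  interval_cases a <;> interval_cases b <;> revert hab <;> norm_num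

set_option maxHeartbeats 1000000 in
open GaussEval Matrix Polynomial Complex in
/-- Gauss's evaluation: for odd `c > 0`, `G(1,c) = ε_c·√c`. -/
theorem gauss_sum_evaluation (c : ℕ) (hc : Odd c) (hpos : 0 < c) :
    gaussSum2 1 c = epsOdd c * (Real.sqrt c : ℂ) := by
  haveI : NeZero c := ⟨hpos.ne'⟩
  obtain ⟨k, hck⟩ := hc
  set s : ℝ := Real.sqrt c with hsdef
  have hs : 0 < s := Real.sqrt_pos.2 (by exact_mod_cast hpos)
  have hs2 : (s:ℂ)^2 = (c:ℂ) := by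
    have h : s^2 = (c:ℝ) := Real.sq_sqrt (by positivity)
    calc (s:ℂ)^2 = ((s^2 : ℝ) : ℂ) := by push_cast; ring
      _ = (c:ℂ) := by rw [h]; norm_cast
  have hc0 : (c:ℂ) ≠ 0 := Nat.cast_ne_zero.2 hpos.ne'
  clear_value s
  set R := (Fm c).charpoly.roots with hR
  clear_value R
  have hmem : ∀ x ∈ R, x = (s:ℂ) ∨ x = Complex.I * s ∨ x = -(s:ℂ) ∨ x = -(Complex.I * s) := by
    intro x hx
    rw [hR] at hx
    have h4 := root_pow_four (Fm c) ((c:ℂ)^2) (Fm_pow_four c) hx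
    have hid : (x - s) * (x + s) * ((x - Complex.I*s) * (x + Complex.I*s))
        = x^4 - (s:ℂ)^4 := by
      linear_combination ((s:ℂ)^2 - x^2) * (s:ℂ)^2 * Complex.I_sq
    have hzero : (x - s) * (x + s) * ((x - Complex.I*s) * (x + Complex.I*s)) = 0 := by
      rw [hid, h4, ← hs2]; ring
    rcases mul_eq_zero.1 hzero with h | h
    · rcases mul_eq_zero.1 h with h | h
      · exact Or.inl (sub_eq_zero.1 h)
      · exact Or.inr (Or.inr (Or.inl (add_eq_zero_iff_eq_neg.1 h)))
    · rcases mul_eq_zero.1 h with h | h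
      · exact Or.inr (Or.inl (sub_eq_zero.1 h))
      · exact Or.inr (Or.inr (Or.inr (add_eq_zero_iff_eq_neg.1 h)))
  have hcard : Multiset.card R = c := by
    rw [hR, (Polynomial.splits_iff_card_roots).1 (IsAlgClosed.splits _),
      Matrix.charpoly_natDegree_eq_dim, ZMod.card]
  obtain ⟨m0, m1, m2, m3, hm, hsum, hprod⟩ :=
    multiset_four R (s:ℂ) (Complex.I*s) (-(s:ℂ)) (-(Complex.I*s)) hmem
  rw [hcard] at hm
  -- trace identity
  have hGs : Gs c = R.sum := by
    rw [hR, ← trace_Fm c, Matrix.trace_eq_sum_roots_charpoly]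
  have hGsum : Gs c = m0 • (s:ℂ) + m1 • (Complex.I * s) + m2 • (-(s:ℂ))
      + m3 • (-(Complex.I*s)) := by
    have h := hsum (fun z => z)
    rw [Multiset.map_id'] at h
    rw [hGs, h]
  -- trace of square
  have hsq : (c:ℂ) = (R.map (fun z => z^2)).sum := by
    rw [hR, ← trace_Fm_sq c ⟨k, hck⟩, Matrix.trace_eq_sum_roots_charpoly, charpoly_sq_roots]
  have hsq2 := hsum (fun z => z^2)
  have hE2 : m0 + m2 = m1 + m3 + 1 := by
    have hv2 : (Complex.I*(s:ℂ))^2 = -(c:ℂ) := by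
      rw [mul_pow, Complex.I_sq, hs2]; ring
    have hv3 : ((-(s:ℂ)))^2 = (c:ℂ) := by rw [neg_sq, hs2]
    have hv4 : ((-(Complex.I*(s:ℂ))))^2 = -(c:ℂ) := by rw [neg_sq, hv2]
    rw [hsq2, hv2, hv3, hv4, hs2] at hsq
    have h' : ((m0 + m2 : ℕ) : ℂ) * c = ((m1 + m3 + 1 : ℕ) : ℂ) * c := by
      push_cast [nsmul_eq_mul] at hsq ⊢
      linear_combination -hsq
    exact_mod_cast mul_right_cancel₀ hc0 h'
  -- Gauss sum in terms of a, b
  set a : ℤ := (m0:ℤ) - m2 with hadef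
  set b : ℤ := (m1:ℤ) - m3 with hbdef
  clear_value a b
  have hG : Gs c = (s:ℂ) * ((a:ℂ) + (b:ℂ) * Complex.I) := by
    rw [hGsum, hadef, hbdef]
    push_cast [nsmul_eq_mul]
    ring
  have hstar : star (Gs c) = (s:ℂ) * ((a:ℂ) - (b:ℂ) * Complex.I) := by
    rw [hG]
    simp only [star_mul', Complex.star_def, map_add, _root_.map_mul, map_intCast,
      Complex.conj_ofReal, Complex.conj_I]
    ring
  have hab : a^2 + b^2 = 1 := by
    have h := Gs_mul_star c ⟨k, hck⟩
    rw [hstar, hG] at h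
    have h2 : (c:ℂ) * (((a:ℂ))^2 + ((b:ℂ))^2) = (c:ℂ) * 1 := by
      rw [mul_one]
      linear_combination h - ((a:ℂ)^2 + (b:ℂ)^2) * hs2
        + (s:ℂ)^2 * (b:ℂ)^2 * Complex.I_sq
    have h3 : ((a:ℂ))^2 + ((b:ℂ))^2 = 1 := mul_left_cancel₀ hc0 h2
    exact_mod_cast h3
  -- determinant
  obtain ⟨W, Np, hW, hNp, hdet⟩ := det_Fm c k hck
  have hdetprod : (Fm c).det
      = (s:ℂ)^m0 * (Complex.I*s)^m1 * (-(s:ℂ))^m2 * (-(Complex.I*(s:ℂ)))^m3 := by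
    rw [Matrix.det_eq_prod_roots_charpoly, ← hR, hprod]
  have hpows : (s:ℂ)^m0 * (Complex.I*s)^m1 * (-(s:ℂ))^m2 * (-(Complex.I*(s:ℂ)))^m3
      = (s:ℂ)^c * Complex.I^(m1+2*m2+3*m3) := by
    have en1 : (-(s:ℂ)) = Complex.I^2 * s := by rw [Complex.I_sq]; ring
    have en2 : (-(Complex.I*(s:ℂ))) = Complex.I^3 * s := by
      rw [pow_succ, Complex.I_sq]; ring
    rw [en1, en2, ← hm]
    ring
  set A : ℕ := m1+2*m2+3*m3 with hAdef
  clear_value A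
  have hkey : (s:ℂ)^c * Complex.I^A = Complex.I^Np * W := by
    rw [← hpows, ← hdetprod, hdet]
  have hI4 : Complex.I^4 = 1 := by
    rw [show (4:ℕ) = 2*2 from rfl, pow_mul, Complex.I_sq]
    norm_num
  have hfin : Complex.I ^ (A + 3*Np) * (s:ℂ)^c = (W:ℂ) := by
    calc Complex.I^(A+3*Np) * (s:ℂ)^c
        = ((s:ℂ)^c * Complex.I^A) * Complex.I^(3*Np) := by rw [pow_add]; ring
      _ = (Complex.I^Np * W) * Complex.I^(3*Np) := by rw [hkey]
      _ = (W:ℂ) * Complex.I^(4*Np) := by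
          rw [show 4*Np = Np + 3*Np from by ring, pow_add]; ring
      _ = (W:ℂ) := by rw [pow_mul, hI4, one_pow, mul_one]
  have hsc : (0:ℝ) < s^c := pow_pos hs c
  set r : ℝ := W / s^c with hrdef
  have hIB : Complex.I ^ (A + 3*Np) = ((r : ℝ) : ℂ) := by
    have hcast : ((r : ℝ) : ℂ) = (W:ℂ) / ((s:ℂ))^c := by rw [hrdef]; push_cast; ring
    rw [hcast, eq_div_iff (pow_ne_zero c (Complex.ofReal_ne_zero.2 hs.ne'))]
    exact hfin
  clear_value r
  have hrpos : (0:ℝ) < r := by rw [hrdef]; exact div_pos hW hsc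
  have hdvd : 4 ∣ (A + 3*Np) := by
    rw [← Nat.div_add_mod (A + 3*Np) 4, pow_add, pow_mul, hI4, one_pow, one_mul] at hIB
    have hmod : (A + 3*Np) % 4 = 0 ∨ (A + 3*Np) % 4 = 1 ∨ (A + 3*Np) % 4 = 2
        ∨ (A + 3*Np) % 4 = 3 := by omega
    rcases hmod with h | h | h | h
    · omega
    · rw [h, pow_one] at hIB
      have h2 := congrArg Complex.im hIB
      simp only [Complex.I_im, Complex.ofReal_im] at h2
      exact absurd h2 (by norm_num)
    · rw [h, Complex.I_sq] at hIB
      have h2 := congrArg Complex.re hIB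
      simp only [Complex.neg_re, Complex.one_re, Complex.ofReal_re] at h2
      linarith
    · rw [h, show Complex.I^3 = -Complex.I from by rw [pow_succ, Complex.I_sq]; ring] at hIB
      have h2 := congrArg Complex.im hIB
      simp only [Complex.neg_im, Complex.I_im, Complex.ofReal_im] at h2
      exact absurd h2 (by norm_num)
  -- final case analysis
  have hd := int_sq_cases a b hab
  rw [gaussSum2_eq_Gs c, hG]
  have hmodc : c % 4 = 1 ∨ c % 4 = 3 := by omega
  rcases hmodc with hm4 | hm4
  · have heps : epsOdd c = 1 := by rw [epsOdd, if_pos hm4]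
    have hab1 : a = 1 ∧ b = 0 := by
      obtain ⟨t, ht⟩ : ∃ t, c = 4*t+1 := ⟨c/4, by omega⟩
      obtain ⟨v, hv⟩ : ∃ v, Np = 8*v + 2*t := by
        refine ⟨t*t, ?_⟩
        have h1 : c * (c-1) = 2*(8*(t*t) + 2*t) := by
          rw [ht, show 4*t+1-1 = 4*t from by omega]
          ring
        omega
      omega
    rw [hab1.1, hab1.2, heps]
    push_cast
    ring
  · have heps : epsOdd c = Complex.I := by rw [epsOdd, if_neg (by omega)]
    have hab1 : a = 0 ∧ b = 1 := by
      obtain ⟨t, ht⟩ : ∃ t, c = 4*t+3 := ⟨c/4, by omega⟩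
      obtain ⟨v, hv⟩ : ∃ v, Np = 8*v + 10*t + 3 := by
        refine ⟨t*t, ?_⟩
        have h1 : c * (c-1) = 2*(8*(t*t) + 10*t + 3) := by
          rw [ht, show 4*t+3-1 = 4*t+2 from by omega]
          ring
        omega
      omega
    rw [hab1.1, hab1.2, heps]
    push_cast
    ring
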